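/- arXiv:1004.4224 — 2 statements merged into one kernel-verified Lean document; each statement's English description precedes it below -/
import Mathlib

section
/- Let R be a graded ring of dimension d and M a finitely generated graded R-module with λ_R(M) < ∞ and pd_R(M) < ∞. Write P_R(t) = p(t)/((1-t)^d g(t)) with p(1) ≠ 0 and g(1) ≠ 0. Then (1-t)^d divides χ_M^R(t) in the Laurent polynomial ring ℤ[t, t^{-1}], where χ_M^R(t) = P_M(t)/P_R(t). -/
/-- The length of a module, realized as the Krull dimension of its lattice of submodules. -/
noncomputable def moduleLength (R M : Type*) [Semiring R] [AddCommMonoid M] [Module R M] :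
    WithBot ℕ∞ :=
  Order.krullDim (Submodule R M)

/-- `M` has a finite resolution by finitely generated free `R`-modules; this is the meaning
of `pd_R(M) < ∞` for finitely generated modules over a Noetherian ring. -/
def HasFiniteFreeResolution (R M : Type*) [CommRing R] [AddCommGroup M] [Module R M] :
    Prop :=
  ∃ (r : ℕ → ℕ) (D : ∀ i : ℕ, ((Fin (r (i + 1)) → R) →ₗ[R] (Fin (r i) → R)))
    (ε : (Fin (r 0) → R) →ₗ[R] M) (N : ℕ),
    (∀ i, N ≤ i → r i = 0) ∧ Function.Surjective ε ∧ Function.Exact (D 0) ε ∧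
      ∀ i : ℕ, Function.Exact (D (i + 1)) (D i)



noncomputable section Stmt7Aux

open HahnSeries Function

/-- Sum of all coefficients ("evaluation at 1") of a Laurent series. -/
def evOne (a : LaurentSeries ℤ) : ℤ := ∑ᶠ n, a.coeff n

lemma coeff_finsetSum {ι : Type*} (s : Finset ι) (f : ι → LaurentSeries ℤ) (n : ℤ) :
    (∑ i ∈ s, f i).coeff n = ∑ i ∈ s, (f i).coeff n :=
  map_sum (⟨⟨fun x => x.coeff n, rfl⟩, fun _ _ => HahnSeries.coeff_add⟩ :
    LaurentSeries ℤ →+ ℤ) f s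

lemma evOne_single (n r : ℤ) : evOne (HahnSeries.single n r) = r := by
  rw [evOne]
  exact (finsum_eq_single (fun m => (HahnSeries.single n r).coeff m) n
    (fun m hm => by simp [HahnSeries.coeff_single, hm])).trans (HahnSeries.coeff_single_same n r)

lemma mul_support_finite {a b : LaurentSeries ℤ} (ha : a.support.Finite)
    (hb : b.support.Finite) : (a * b).support.Finite :=
  (ha.add hb).subset HahnSeries.support_mul_subset

lemma single_support_finite (n r : ℤ) : (HahnSeries.single n r).support.Finite :=
  (Set.finite_singleton n).subset HahnSeries.support_single_subset

lemma evOne_single_mul (n r : ℤ) (b : LaurentSeries ℤ) (hb : b.support.Finite) :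
    evOne (HahnSeries.single n r * b) = r * evOne b := by
  have h1 : ∀ k : ℤ, (HahnSeries.single n r * b).coeff k = r * b.coeff (k - n) := by
    intro k
    have := HahnSeries.coeff_single_mul_add (r := r) (x := b) (a := k - n) (b := n)
    rwa [sub_add_cancel] at this
  have hfin : (Function.support fun k : ℤ => b.coeff (k - n)).Finite := by
    have : (Function.support fun k : ℤ => b.coeff (k - n)) ⊆ (fun k : ℤ => k + n) '' b.support := by
      intro k hk
      exact ⟨k - n, hk, by ring⟩
    exact (hb.image _).subset this
  calc evOne (HahnSeries.single n r * b) = ∑ᶠ k, r * b.coeff (k - n) := by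
        rw [evOne]; exact finsum_congr fun k => h1 k
    _ = r * ∑ᶠ k, b.coeff (k - n) := (mul_finsum _ r).symm
    _ = r * evOne b := by
        rw [evOne]
        congr 1
        exact finsum_comp (g := fun k => b.coeff (k - n)) (fun k : ℤ => k + n)
          (Equiv.addRight n).bijective |>.symm.trans
          (finsum_congr fun k => by rw [add_sub_cancel_right])

lemma evOne_mul (a b : LaurentSeries ℤ) (ha : a.support.Finite) (hb : b.support.Finite) :
    evOne (a * b) = evOne a * evOne b := by
  classical
  have hrep : a = ∑ i ∈ ha.toFinset, HahnSeries.single i (a.coeff i) := by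
    ext n
    rw [coeff_finsetSum]
    simp only [HahnSeries.coeff_single]
    have hsum := Finset.sum_eq_single (s := ha.toFinset)
      (f := fun x => @ite _ (n = x) (Classical.propDecidable _) (a.coeff x) 0) n
      (fun b _ hb => if_neg (fun h => hb h.symm))
      (fun hns => by
        have hn : n ∉ a.support := fun h => hns (ha.mem_toFinset.mpr h)
        have h0 : a.coeff n = 0 := by simpa [HahnSeries.mem_support, not_not] using hn
        simp [h0])
    exact (hsum.trans (if_pos rfl)).symm
  have hterm : ∀ i ∈ ha.toFinset,
      (Function.support fun n => (HahnSeries.single i (a.coeff i) * b).coeff n).Finite :=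
    fun i _ => mul_support_finite (single_support_finite i (a.coeff i)) hb
  calc evOne (a * b) = ∑ᶠ n, (∑ i ∈ ha.toFinset, HahnSeries.single i (a.coeff i) * b).coeff n := by
        rw [evOne]; conv_lhs => rw [hrep, Finset.sum_mul]
    _ = ∑ᶠ n, ∑ i ∈ ha.toFinset, (HahnSeries.single i (a.coeff i) * b).coeff n :=
        finsum_congr fun n => coeff_finsetSum _ _ n
    _ = ∑ i ∈ ha.toFinset, ∑ᶠ n, (HahnSeries.single i (a.coeff i) * b).coeff n :=
        finsum_sum_comm _ _ hterm
    _ = ∑ i ∈ ha.toFinset, a.coeff i * evOne b :=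
        Finset.sum_congr rfl fun i _ => evOne_single_mul i (a.coeff i) b hb
    _ = (∑ i ∈ ha.toFinset, a.coeff i) * evOne b := by rw [Finset.sum_mul]
    _ = evOne a * evOne b := by simp only [evOne]; rw [finsum_eq_sum a.coeff ha]; rfl

lemma one_support_finite : (1 : LaurentSeries ℤ).support.Finite := by
  apply (Set.finite_singleton (0 : ℤ)).subset
  intro n hn
  simp only [HahnSeries.mem_support, HahnSeries.coeff_one] at hn
  by_contra h
  simp only [Set.mem_singleton_iff] at h
  exact hn (if_neg h)

lemma u_support_finite : ((1 : LaurentSeries ℤ) - HahnSeries.single 1 1).support.Finite := by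
  apply (one_support_finite.union (single_support_finite 1 1)).subset
  intro n hn
  simp only [HahnSeries.mem_support, HahnSeries.coeff_sub] at hn
  by_contra h
  simp only [Set.mem_union, HahnSeries.mem_support, not_or, not_not] at h
  rw [h.1, h.2, sub_zero] at hn
  exact hn rfl

lemma u_pow_support_finite (k : ℕ) :
    (((1 : LaurentSeries ℤ) - HahnSeries.single 1 1) ^ k).support.Finite := by
  induction k with
  | zero => simpa using one_support_finite
  | succ k ih => rw [pow_succ]; exact mul_support_finite ih u_support_finite

lemma evOne_u : evOne ((1 : LaurentSeries ℤ) - HahnSeries.single 1 1) = 0 := by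
  rw [evOne]
  have h1 : (Function.support fun n : ℤ => (1 : LaurentSeries ℤ).coeff n).Finite :=
    one_support_finite
  have h2 : (Function.support fun n : ℤ => (HahnSeries.single (1:ℤ) (1:ℤ)).coeff n).Finite :=
    single_support_finite 1 1
  have : ∑ᶠ n, ((1 : LaurentSeries ℤ) - HahnSeries.single 1 1).coeff n
      = (∑ᶠ n, (1 : LaurentSeries ℤ).coeff n) - ∑ᶠ n, (HahnSeries.single (1:ℤ) (1:ℤ)).coeff n := by
    rw [← finsum_sub_distrib h1 h2]
    exact finsum_congr fun n => HahnSeries.coeff_sub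
  rw [this]
  have hone : ∑ᶠ n, (1 : LaurentSeries ℤ).coeff n = 1 := by
    rw [finsum_eq_single _ (0 : ℤ) (fun m hm => by simp [HahnSeries.coeff_one, hm])]
    simp [HahnSeries.coeff_one]
  have hsingle : ∑ᶠ n, (HahnSeries.single (1:ℤ) (1:ℤ)).coeff n = 1 := evOne_single 1 1
  rw [hone, hsingle, sub_self]

lemma u_ne_zero : ((1 : LaurentSeries ℤ) - HahnSeries.single 1 1) ≠ 0 := by
  intro h
  have := congrArg (fun x : LaurentSeries ℤ => x.coeff 0) h
  simp only [HahnSeries.coeff_sub, HahnSeries.coeff_one, HahnSeries.coeff_single,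
    HahnSeries.coeff_zero] at this
  norm_num at this

lemma exists_u_factor (a : LaurentSeries ℤ) (ha : a.support.Finite) (h0 : evOne a = 0) :
    ∃ a' : LaurentSeries ℤ, a'.support.Finite ∧
      a = ((1 : LaurentSeries ℤ) - HahnSeries.single 1 1) * a' := by
  classical
  rcases ha.toFinset.eq_empty_or_nonempty with hemp | hne
  · refine ⟨0, by rw [HahnSeries.support_zero]; exact Set.finite_empty, ?_⟩
    have : a = 0 := by
      ext n
      have : n ∉ a.support := fun h => by
        rw [← ha.mem_toFinset, hemp] at h; exact absurd h (Finset.notMem_empty n)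
      simpa [HahnSeries.mem_support, not_not] using this
    rw [this, mul_zero]
  · set s := ha.toFinset with hs
    set c : ℤ → ℤ := fun n => ∑ i ∈ s.filter (· ≤ n), a.coeff i with hc
    have hcfin : (Function.support c).Finite := by
      apply (Set.finite_Ico (s.min' hne) (s.max' hne)).subset
      intro n hn
      simp only [Function.mem_support] at hn
      by_contra hrange
      simp only [Set.mem_Ico, not_and_or, not_le, not_lt] at hrange
      rcases hrange with hlt | hge
      · apply hn
        have : s.filter (· ≤ n) = ∅ := by
          apply Finset.filter_eq_empty_iff.mpr
          intro i hi hle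
          exact absurd (lt_of_le_of_lt hle hlt) (not_lt.mpr (s.min'_le i hi))
        rw [hc]; simp only []; rw [this, Finset.sum_empty]
      · apply hn
        have hfull : s.filter (· ≤ n) = s := by
          apply Finset.filter_true_of_mem
          intro i hi
          exact le_trans (s.le_max' i hi) hge
        have : c n = ∑ i ∈ s, a.coeff i := by rw [hc]; simp only []; rw [hfull]
        rw [this]
        exact (finsum_eq_sum a.coeff ha).symm.trans h0
    refine ⟨⟨c, hcfin.isPWO⟩, hcfin, ?_⟩
    ext n
    have hsingle : (HahnSeries.single (1:ℤ) (1:ℤ) * (⟨c, hcfin.isPWO⟩ : LaurentSeries ℤ)).coeff n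
        = c (n - 1) := by
      have := HahnSeries.coeff_single_mul_add (r := (1:ℤ))
        (x := (⟨c, hcfin.isPWO⟩ : LaurentSeries ℤ)) (a := n - 1) (b := 1)
      rw [sub_add_cancel, one_mul] at this
      exact this
    rw [sub_mul, one_mul, HahnSeries.coeff_sub, hsingle]
    show a.coeff n = c n - c (n - 1)
    have hterm : ∀ i : ℤ, (if i ≤ n then a.coeff i else 0) - (if i ≤ n - 1 then a.coeff i else 0)
        = if i = n then a.coeff i else 0 := by
      intro i
      by_cases h1 : i ≤ n - 1
      · rw [if_pos (by omega : i ≤ n), if_pos h1, sub_self, if_neg (by omega : ¬ i = n)]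
      · by_cases h2 : i ≤ n
        · rw [if_pos h2, if_neg h1, sub_zero, if_pos (by omega : i = n)]
        · rw [if_neg h2, if_neg h1, sub_self, if_neg (by omega : ¬ i = n)]
    have hcn : c n - c (n - 1) = ∑ i ∈ s, if i = n then a.coeff i else 0 := by
      rw [hc]
      simp only []
      rw [Finset.sum_filter, Finset.sum_filter, ← Finset.sum_sub_distrib]
      exact Finset.sum_congr rfl fun i _ => hterm i
    rw [hcn, Finset.sum_ite_eq' s n (fun i => a.coeff i)]
    by_cases hn : n ∈ s
    · simp [hn]
    · simp only [hn, if_false]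
      have : n ∉ a.support := fun h => hn (ha.mem_toFinset.mpr h)
      simpa [HahnSeries.mem_support, not_not] using this

lemma key_induction (p : LaurentSeries ℤ) (hp : p.support.Finite) (hp1 : evOne p ≠ 0) :
    ∀ (k : ℕ) (χ s : LaurentSeries ℤ), χ.support.Finite → s.support.Finite →
      χ * p = ((1 : LaurentSeries ℤ) - HahnSeries.single 1 1) ^ k * s →
      ∃ χt : LaurentSeries ℤ, χt.support.Finite ∧
        χ = ((1 : LaurentSeries ℤ) - HahnSeries.single 1 1) ^ k * χt := by
  intro k
  induction k with
  | zero => intro χ s hχ hs h; exact ⟨χ, hχ, by rw [pow_zero, one_mul]⟩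
  | succ k ih =>
    intro χ s hχ hs h
    set u : LaurentSeries ℤ := (1 : LaurentSeries ℤ) - HahnSeries.single 1 1 with hu
    have hss : (u ^ k * s).support.Finite := mul_support_finite (u_pow_support_finite k) hs
    have hev : evOne χ = 0 := by
      have h1 : evOne (χ * p) = evOne χ * evOne p := evOne_mul _ _ hχ hp
      have h2 : evOne (χ * p) = 0 := by
        have hre : χ * p = u * (u ^ k * s) := by rw [h, pow_succ]; ring
        rw [hre, evOne_mul _ _ u_support_finite hss, evOne_u, zero_mul]
      rcases mul_eq_zero.mp (h1 ▸ h2) with h' | h'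
      · exact h'
      · exact absurd h' hp1
    obtain ⟨χ₁, hχ₁, hfac⟩ := exists_u_factor χ hχ hev
    have hcancel : χ₁ * p = u ^ k * s := by
      apply mul_left_cancel₀ u_ne_zero
      calc u * (χ₁ * p) = (u * χ₁) * p := by ring
        _ = χ * p := by rw [← hfac]
        _ = u ^ (k + 1) * s := h
        _ = u * (u ^ k * s) := by rw [pow_succ]; ring
    obtain ⟨χt, h1, h2⟩ := ih χ₁ s hχ₁ hs hcancel
    exact ⟨χt, h1, by rw [hfac, h2, pow_succ]; ring⟩

end Stmt7Aux


lemma finite_pieces {R₀ : Type*} [CommRing R₀]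
    {A : Type*} [CommRing A] [Algebra R₀ A]
    (𝒜 : ℤ → Submodule R₀ A) [GradedAlgebra 𝒜] (h𝒜 : ∀ i < (0 : ℤ), 𝒜 i = ⊥)
    {M : Type*} [AddCommGroup M] [Module A M] [Module R₀ M] [IsScalarTower R₀ A M]
    (ℳ : ℤ → Submodule R₀ M) [SetLike.GradedSMul 𝒜 ℳ] [DirectSum.Decomposition ℳ]
    (L : ℕ) (hL : Order.krullDim (Submodule A M) = ((L : ℕ∞) : WithBot ℕ∞)) :
    {n : ℤ | ℳ n ≠ ⊥}.Finite := by
  classical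
  set S : ℤ → Submodule R₀ M := fun n => ⨆ k : Set.Ici n, ℳ (k : ℤ) with hS
  have Hhom : ∀ (n i : ℤ) (a : A), a ∈ 𝒜 i → ∀ x, x ∈ S n → a • x ∈ S n := by
    intro n i a hai x hx
    refine Submodule.iSup_induction (motive := fun y => a • y ∈ S n)
      (fun k : Set.Ici n => ℳ (k : ℤ)) hx ?_ ?_ ?_
    · rintro ⟨k, hk⟩ y hy
      by_cases hi : i < 0
      · have ha0 : a = 0 := by
          have h' := hai; rw [h𝒜 i hi] at h'; simpa using h'
        rw [ha0, zero_smul]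
        exact (S n).zero_mem
      · push_neg at hi
        have hmem : a • y ∈ ℳ (i + k) := SetLike.GradedSMul.smul_mem hai hy
        have hge : n ≤ i + k := by
          have : n ≤ k := hk
          omega
        exact le_iSup (fun k : Set.Ici n => ℳ (k : ℤ)) ⟨i + k, hge⟩ hmem
    · show a • (0 : M) ∈ S n
      rw [smul_zero]; exact (S n).zero_mem
    · intro y z hy hz
      show a • (y + z) ∈ S n
      rw [smul_add]; exact (S n).add_mem hy hz
  set T : ℤ → Submodule A M := fun n =>
    { carrier := (S n : Set M)
      add_mem' := fun hx hy => (S n).add_mem hx hy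
      zero_mem' := (S n).zero_mem
      smul_mem' := by
        intro a x hx
        have hdec := DirectSum.sum_support_decompose 𝒜 a
        have hsum : (∑ i ∈ (DirectSum.decompose 𝒜 a).support,
            ((DirectSum.decompose 𝒜 a) i : A)) • x ∈ S n := by
          rw [Finset.sum_smul]
          exact (S n).sum_mem fun i _ => Hhom n i _ (SetLike.coe_mem _) x hx
        rwa [hdec] at hsum } with hT
  have memT : ∀ (n : ℤ) (x : M), x ∈ T n ↔ x ∈ S n := fun n x => Iff.rfl
  have Tmono : ∀ {n m : ℤ}, n ≤ m → T m ≤ T n := by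
    intro n m h x hx
    rw [memT] at hx ⊢
    exact iSup_le (fun k : Set.Ici m =>
      le_iSup (fun k : Set.Ici n => ℳ (k : ℤ)) ⟨(k : ℤ), le_trans h k.2⟩) hx
  have Tstrict : ∀ b : ℤ, ℳ b ≠ ⊥ → T (b + 1) < T b := by
    intro b hb
    obtain ⟨x, hxM, hx0⟩ := (Submodule.ne_bot_iff _).mp hb
    have hxTb : x ∈ T b := (memT b x).mpr
      (le_iSup (fun k : Set.Ici b => ℳ (k : ℤ)) ⟨b, le_refl b⟩ hxM)
    have hxnot : x ∉ T (b + 1) := by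
      intro hxT
      have hle : S (b + 1) ≤ ⨆ j, ⨆ _ : j ≠ b, ℳ j :=
        iSup_le fun k => le_iSup₂ (f := fun (j : ℤ) (_ : j ≠ b) => ℳ j) (k : ℤ)
          (by have : (b + 1 : ℤ) ≤ k := k.2; omega)
      have hind := DirectSum.IsInternal.submodule_iSupIndep
        (DirectSum.Decomposition.isInternal ℳ) (i := b)
      exact hx0 (Submodule.disjoint_def.mp hind x hxM (hle ((memT _ x).mp hxT)))
    refine lt_of_le_of_ne (Tmono (by omega)) fun he => hxnot ?_
    rw [he]; exact hxTb
  by_contra hfin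
  have hinf : {n : ℤ | ℳ n ≠ ⊥}.Infinite := hfin
  obtain ⟨t, hts, htc⟩ := hinf.exists_subset_card_eq (L + 2)
  set F : Fin (L + 2) → Submodule A M :=
    fun i => T ((t.orderIsoOfFin htc i.rev : t) : ℤ) with hF
  have hstep : ∀ i : Fin (L + 1), F i.castSucc < F i.succ := by
    intro i
    have h1 : (i.castSucc).rev = i.rev.succ := by
      ext
      simp only [Fin.val_rev, Fin.coe_castSucc, Fin.val_succ]
      omega
    have h2 : (i.succ).rev = i.rev.castSucc := by
      ext
      simp only [Fin.val_rev, Fin.coe_castSucc, Fin.val_succ]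
      omega
    show T ((t.orderIsoOfFin htc (i.castSucc).rev : t) : ℤ)
      < T ((t.orderIsoOfFin htc (i.succ).rev : t) : ℤ)
    rw [h1, h2]
    set j := i.rev with hj
    have hmono := (t.orderIsoOfFin htc).strictMono (Fin.castSucc_lt_succ (i := j))
    have hab : ((t.orderIsoOfFin htc j.castSucc : t) : ℤ) <
        ((t.orderIsoOfFin htc j.succ : t) : ℤ) := hmono
    have hanb : ℳ (((t.orderIsoOfFin htc j.castSucc : t) : ℤ)) ≠ ⊥ :=
      hts (t.orderIsoOfFin htc j.castSucc).2
    calc T (((t.orderIsoOfFin htc j.succ : t) : ℤ))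
        ≤ T (((t.orderIsoOfFin htc j.castSucc : t) : ℤ) + 1) := Tmono (by omega)
      _ < T (((t.orderIsoOfFin htc j.castSucc : t) : ℤ)) := Tstrict _ hanb
  have hlen := Order.LTSeries.length_le_krullDim (⟨L + 1, F, hstep⟩ : LTSeries (Submodule A M))
  rw [hL] at hlen
  have hle : ((L + 1 : ℕ) : WithBot ℕ∞) ≤ ((L : ℕ∞) : WithBot ℕ∞) := hlen
  norm_cast at hle
  omega

/-- Let `A` be a graded ring of characteristic `p > 0` and dimension `d`
(Noetherian, finitely generated over an Artinian local ring `R₀`), and `M` a finitely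
generated graded `A`-module with `λ_A(M) < ∞` and `pd_A(M) < ∞`.  Write
`P_A(t) = p(t)/((1-t)^d g(t))` with `p(1) ≠ 0` and `g(1) ≠ 0`, and let
`χ(t) = P_M(t)/P_A(t)` (a Laurent polynomial).  Then `(1-t)^d` divides `χ(t)` in
`ℤ[t, t⁻¹]`, i.e. `χ = (1-t)^d ⬝ χ̃` for some Laurent polynomial `χ̃`. -/
theorem stmt7 (R₀ : Type*) [CommRing R₀] [IsArtinianRing R₀] [IsLocalRing R₀]
    (A : Type*) [CommRing A] [Algebra R₀ A] [IsNoetherianRing A] [Algebra.FiniteType R₀ A]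
    (p₀ : ℕ) (hp₀ : p₀.Prime) [CharP A p₀]
    (𝒜 : ℤ → Submodule R₀ A) [GradedAlgebra 𝒜] (h𝒜 : ∀ i < (0 : ℤ), 𝒜 i = ⊥)
    (M : Type*) [AddCommGroup M] [Module A M] [Module R₀ M] [IsScalarTower R₀ A M]
    [Module.Finite A M]
    (ℳ : ℤ → Submodule R₀ M) [SetLike.GradedSMul 𝒜 ℳ] [DirectSum.Decomposition ℳ]
    (L : ℕ) (hL : moduleLength A M = ((L : ℕ∞) : WithBot ℕ∞))
    (hpd : HasFiniteFreeResolution A M)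
    (d : ℕ) (hd : ringKrullDim A = d)
    (ℓA ℓM : ℤ → ℕ)
    (hℓA : ∀ n, moduleLength R₀ (𝒜 n) = ((ℓA n : ℕ∞) : WithBot ℕ∞))
    (hℓM : ∀ n, moduleLength R₀ (ℳ n) = ((ℓM n : ℕ∞) : WithBot ℕ∞))
    (PA PM : LaurentSeries ℤ)
    (hPA : ∀ n, PA.coeff n = (ℓA n : ℤ)) (hPM : ∀ n, PM.coeff n = (ℓM n : ℤ))
    (p g : LaurentSeries ℤ) (hpfin : p.support.Finite) (hgfin : g.support.Finite)
    (hp1 : (∑ᶠ n, p.coeff n) ≠ 0) (hg1 : (∑ᶠ n, g.coeff n) ≠ 0)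
    (hPAp : PA * ((1 - HahnSeries.single (1 : ℤ) (1 : ℤ)) ^ d * g) = p)
    (χ : LaurentSeries ℤ) (hχfin : χ.support.Finite) (hχ : PM = χ * PA) :
    ∃ χt : LaurentSeries ℤ, χt.support.Finite ∧
      χ = (1 - HahnSeries.single (1 : ℤ) (1 : ℤ)) ^ d * χt := by
  have hIfin : {n : ℤ | ℳ n ≠ ⊥}.Finite :=
    finite_pieces 𝒜 h𝒜 ℳ L hL
  have hsupp : PM.support ⊆ {n : ℤ | ℳ n ≠ ⊥} := by
    intro n hn
    simp only [Set.mem_setOf_eq]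
    intro hbot
    have h1 := hℓM n
    rw [hbot] at h1
    have h2 : moduleLength R₀ (⊥ : Submodule R₀ M) = 0 := by
      have hsub : Subsingleton ↥(⊥ : Submodule R₀ M) := by
        constructor
        rintro ⟨x, hx⟩ ⟨y, hy⟩
        rw [Submodule.mem_bot] at hx hy
        subst hx; subst hy; rfl
      have hsub2 : Subsingleton (Submodule R₀ ↥(⊥ : Submodule R₀ M)) :=
        (Submodule.subsingleton_iff R₀).mpr hsub
      have : Unique (Submodule R₀ ↥(⊥ : Submodule R₀ M)) := uniqueOfSubsingleton ⊥
      exact Order.krullDim_eq_zero_of_unique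
    have h3 : ((ℓM n : ℕ∞) : WithBot ℕ∞) = 0 := h1.symm.trans h2
    have h4 : ℓM n = 0 := by exact_mod_cast h3
    have : PM.coeff n = 0 := by rw [hPM n, h4]; norm_num
    exact (HahnSeries.mem_support PM n).mp hn this
  have hPMfin : PM.support.Finite := hIfin.subset hsupp
  have heq : χ * p = ((1 : LaurentSeries ℤ) - HahnSeries.single 1 1) ^ d * (PM * g) := by
    rw [← hPAp, hχ]; ring
  exact key_induction p hpfin hp1 d χ (PM * g) hχfin
    (mul_support_finite hPMfin hgfin) heq
end

section
/- Let R = k[x_1,...,x_d] be a polynomial ring over a field k of characteristic p > 0, graded with each variable of degree 1, and let I be a homogeneous ideal with dim_k(R/I) < ∞. Then for every q = p^e, dim_k(R/I^{[q]}) = q^d · dim_k(R/I). -/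
open MvPolynomial

/-- The Frobenius power `I^{[q]}` of an ideal: the ideal generated by the `q`-th powers of
the elements of `I`. -/
def Ideal.frobPow {R : Type*} [CommRing R] (I : Ideal R) (q : ℕ) : Ideal R :=
  Ideal.span ((fun a => a ^ q) '' (I : Set R))

/-- An ideal of the polynomial ring is homogeneous (w.r.t. the standard grading) if it is
stable under taking homogeneous components. -/
def MvPolynomial.IdealIsHomogeneous {k : Type*} [CommRing k] {σ : Type*}
    (I : Ideal (MvPolynomial σ k)) : Prop :=
  ∀ a ∈ I, ∀ n : ℕ, homogeneousComponent n a ∈ I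

namespace Stmt14Aux

variable {k : Type*} [Field k] {d : ℕ}

/-- Coefficient-extraction map: `(phiMap μ q r₀ f)`'s coefficient at `m` is
`μ` applied to the coefficient of `f` at `q • m + r₀`. -/
noncomputable def phiMap (μ : k → k) (q : ℕ) (r₀ : Fin d →₀ ℕ) (f : MvPolynomial (Fin d) k) :
    MvPolynomial (Fin d) k :=
  ∑ m ∈ f.support.image (fun b => (b - r₀).mapRange (· / q) (Nat.zero_div q)),
    monomial m (μ (coeff (q • m + r₀) f))

lemma mapRange_div_eq {q : ℕ} (hq : q ≠ 0) (m r₀ : Fin d →₀ ℕ) :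
    ((q • m + r₀) - r₀).mapRange (· / q) (Nat.zero_div q) = m := by
  ext i
  rw [Finsupp.mapRange_apply, Finsupp.tsub_apply, Finsupp.add_apply, Finsupp.smul_apply,
    smul_eq_mul, Nat.add_sub_cancel, Nat.mul_div_cancel_left _ (Nat.pos_of_ne_zero hq)]

lemma coeff_phiMap {μ : k → k} (hμ0 : μ 0 = 0) {q : ℕ} (hq : q ≠ 0) (r₀ : Fin d →₀ ℕ)
    (f : MvPolynomial (Fin d) k) (m : Fin d →₀ ℕ) :
    coeff m (phiMap μ q r₀ f) = μ (coeff (q • m + r₀) f) := by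
  classical
  rw [phiMap, coeff_sum]
  simp only [coeff_monomial]
  rw [Finset.sum_ite_eq' _ m (fun m' => μ (coeff (q • m' + r₀) f))]
  split_ifs with h
  · rfl
  · by_cases hc : coeff (q • m + r₀) f = 0
    · rw [hc, hμ0]
    · exact absurd (Finset.mem_image.2 ⟨q • m + r₀, mem_support_iff.2 hc, mapRange_div_eq hq m r₀⟩) h

lemma phiMap_add {μ : k → k} (hμ0 : μ 0 = 0) (hμadd : ∀ a b, μ (a + b) = μ a + μ b)
    {q : ℕ} (hq : q ≠ 0) (r₀ : Fin d →₀ ℕ) (f g : MvPolynomial (Fin d) k) :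
    phiMap μ q r₀ (f + g) = phiMap μ q r₀ f + phiMap μ q r₀ g := by
  ext m
  rw [coeff_add, coeff_phiMap hμ0 hq, coeff_phiMap hμ0 hq, coeff_phiMap hμ0 hq, coeff_add, hμadd]

lemma smul_le_iff {q : ℕ} (hq : q ≠ 0) {r₀ : Fin d →₀ ℕ} (hr : ∀ i, r₀ i < q)
    (s m : Fin d →₀ ℕ) : q • s ≤ q • m + r₀ ↔ s ≤ m := by
  rw [Finsupp.le_def, Finsupp.le_def]
  apply forall_congr'
  intro i
  simp only [Finsupp.add_apply, Finsupp.smul_apply, smul_eq_mul]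
  constructor
  · intro h
    have h2 : q * s i < q * (m i + 1) := by
      have := hr i; nlinarith [hr i]
    exact Nat.lt_succ_iff.mp (Nat.lt_of_mul_lt_mul_left h2)
  · intro h; have := hr i; nlinarith

lemma phiMap_mul_monomial {μ : k → k} {q : ℕ} (hμ0 : μ 0 = 0)
    (hμ : ∀ c x, μ (c * x ^ q) = μ c * x) (hq : q ≠ 0)
    {r₀ : Fin d →₀ ℕ} (hr : ∀ i, r₀ i < q) (f : MvPolynomial (Fin d) k)
    (s : Fin d →₀ ℕ) (c : k) :
    phiMap μ q r₀ (f * monomial (q • s) (c ^ q)) = phiMap μ q r₀ f * monomial s c := by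
  ext m
  rw [coeff_phiMap hμ0 hq, coeff_mul_monomial', coeff_mul_monomial']
  by_cases h : s ≤ m
  · rw [if_pos h, if_pos ((smul_le_iff hq hr s m).2 h), hμ, coeff_phiMap hμ0 hq]
    have harg : q • m + r₀ - q • s = q • (m - s) + r₀ := by
      ext i
      simp only [Finsupp.tsub_apply, Finsupp.add_apply, Finsupp.smul_apply, smul_eq_mul]
      have hle : q * s i ≤ q * m i := Nat.mul_le_mul_left _ ((Finsupp.le_def.1 h) i)
      rw [Nat.mul_sub, Nat.sub_add_comm hle]
    rw [harg]
  · rw [if_neg h, if_neg (fun hh => h ((smul_le_iff hq hr s m).1 hh)), hμ0]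

lemma phiMap_monomial_small {μ : k → k} (hμ0 : μ 0 = 0) {q : ℕ} (hq : q ≠ 0)
    {r₀ r' : Fin d →₀ ℕ} (hr : ∀ i, r₀ i < q) (hr' : ∀ i, r' i < q) (c : k) :
    phiMap μ q r₀ (monomial r' c) = if r' = r₀ then C (μ c) else 0 := by
  ext m
  rw [coeff_phiMap hμ0 hq, coeff_monomial]
  by_cases hm : m = 0
  · subst hm
    simp only [smul_zero, zero_add, coeff_zero]
    by_cases h : r' = r₀
    · rw [if_pos h, if_pos h, coeff_C, if_pos rfl]
    · rw [if_neg h, if_neg h, hμ0, coeff_zero]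
  · have h1 : r' ≠ q • m + r₀ := by
      intro hcon
      obtain ⟨i, hi⟩ : ∃ i, m i ≠ 0 := by
        by_contra hcc
        push_neg at hcc
        exact hm (Finsupp.ext hcc)
      have : r' i = q * m i + r₀ i := by
        rw [hcon]; simp [Finsupp.add_apply, Finsupp.smul_apply]
      have := hr' i
      have hmi : 1 ≤ m i := Nat.one_le_iff_ne_zero.2 hi
      nlinarith
    rw [if_neg h1, hμ0]
    split_ifs with h
    · rw [coeff_C, if_neg (fun hc => hm hc.symm)]
    · rw [coeff_zero]

lemma phiMap_mul_pow {p : ℕ} [hpf : Fact p.Prime] [CharP k p] {e : ℕ}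
    {μ : k → k} (hμ0 : μ 0 = 0) (hμadd : ∀ a b, μ (a + b) = μ a + μ b)
    (hμ : ∀ c x, μ (c * x ^ (p ^ e)) = μ c * x)
    {r₀ : Fin d →₀ ℕ} (hr : ∀ i, r₀ i < p ^ e)
    (a f : MvPolynomial (Fin d) k) :
    phiMap μ (p ^ e) r₀ (f * a ^ p ^ e) = phiMap μ (p ^ e) r₀ f * a := by
  have hq : p ^ e ≠ 0 := pow_ne_zero e hpf.out.pos.ne'
  induction a using MvPolynomial.induction_on' with
  | monomial s c =>
    rw [monomial_pow]
    exact phiMap_mul_monomial hμ0 hμ hq hr f s c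
  | add a b ha hb =>
    rw [add_pow_char_pow, mul_add, phiMap_add hμ0 hμadd hq, ha, hb, mul_add]

lemma exists_mu (p : ℕ) [hpf : Fact p.Prime] [CharP k p] (e : ℕ) {c : k} (hc : c ≠ 0) :
    ∃ μ : k → k, μ 0 = 0 ∧ (∀ a b, μ (a + b) = μ a + μ b) ∧
      (∀ a x, μ (a * x ^ (p ^ e)) = μ a * x) ∧ μ c ≠ 0 := by
  classical
  let φ : k →+* k := iterateFrobenius k p e
  have hφ : ∀ x : k, φ x = x ^ p ^ e := fun x => iterateFrobenius_def p e x
  let K : Subfield k := φ.fieldRange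
  obtain ⟨l, hl⟩ : ∃ l : Module.Dual K k, l c ≠ 0 := by
    by_contra hcon
    push_neg at hcon
    exact hc ((Module.forall_dual_apply_eq_zero_iff K c).1 hcon)
  have φinj : Function.Injective φ := φ.injective
  have linv : Function.LeftInverse (Function.invFun φ) φ := Function.leftInverse_invFun φinj
  have hinv : ∀ y : K, φ (Function.invFun ⇑φ (y : k)) = (y : k) := fun y =>
    Function.invFun_eq (RingHom.mem_fieldRange.1 y.2)
  refine ⟨fun a => Function.invFun ⇑φ ((l a : k)), ?_, ?_, ?_, ?_⟩
  · have h := linv 0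
    simpa only [map_zero, ZeroMemClass.coe_zero] using h
  · intro a b
    apply φinj
    beta_reduce
    rw [map_add φ, hinv, hinv, hinv, map_add l]
    push_cast
    ring
  · intro a x
    apply φinj
    beta_reduce
    rw [map_mul φ, hinv]
    have hsx : a * x ^ p ^ e = (⟨φ x, ⟨x, rfl⟩⟩ : K) • a := by
      show _ = φ x * a
      rw [hφ x]; ring
    rw [hsx, map_smul l, hinv]
    show ((⟨φ x, ⟨x, rfl⟩⟩ : K) • l a : k) = _
    rw [Subfield.smul_def]
    push_cast
    rw [hφ x, smul_eq_mul]; ring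
  · intro h0
    apply hl
    have h1 := hinv (l c)
    beta_reduce at h0
    rw [h0, map_zero] at h1
    exact (ZeroMemClass.coe_eq_zero).1 h1.symm

end Stmt14Aux

open Stmt14Aux in
set_option maxHeartbeats 2000000 in
theorem stmt14 (k : Type*) [Field k] (p : ℕ) (hp : p.Prime) [CharP k p] (d e : ℕ)
    (I : Ideal (MvPolynomial (Fin d) k)) (hIhom : MvPolynomial.IdealIsHomogeneous I)
    (hfin : FiniteDimensional k (MvPolynomial (Fin d) k ⧸ I)) :
    Module.finrank k (MvPolynomial (Fin d) k ⧸ I.frobPow (p ^ e)) =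
      (p ^ e) ^ d * Module.finrank k (MvPolynomial (Fin d) k ⧸ I) := by
  classical
  haveI : Fact p.Prime := ⟨hp⟩
  have hq0 : p ^ e ≠ 0 := pow_ne_zero e hp.pos.ne'
  set n := Module.finrank k (MvPolynomial (Fin d) k ⧸ I) with hn
  let bI : Module.Basis (Fin n) k (MvPolynomial (Fin d) k ⧸ I) := Module.finBasis k _
  have hv' : ∀ t : Fin n, ∃ g, Ideal.Quotient.mk I g = bI t :=
    fun t => Ideal.Quotient.mk_surjective _
  choose v hv using hv'
  let toN : (Fin d → Fin (p ^ e)) → (Fin d →₀ ℕ) :=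
    fun r => Finsupp.equivFunOnFinite.symm (fun i => (r i : ℕ))
  have toN_apply : ∀ r i, toN r i = r i := fun r i => rfl
  have toN_lt : ∀ r i, toN r i < p ^ e := fun r i => (r i).isLt
  have htoN : ∀ r1 r2 : Fin d → Fin (p ^ e), toN r1 = toN r2 → r1 = r2 := by
    intro r1 r2 h
    funext i
    exact Fin.ext (congrArg (fun m => m i) h)
  let W : (Fin d → Fin (p ^ e)) × Fin n → MvPolynomial (Fin d) k ⧸ I.frobPow (p ^ e) :=
    fun rt => Ideal.Quotient.mk _ (monomial (toN rt.1) 1 * v rt.2 ^ p ^ e)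
  have hWli : LinearIndependent k W := by
    rw [Fintype.linearIndependent_iff]
    intro g hg
    have hmem : (∑ rt : (Fin d → Fin (p ^ e)) × Fin n,
        g rt • (monomial (toN rt.1) 1 * v rt.2 ^ p ^ e)) ∈
          Submodule.span (MvPolynomial (Fin d) k)
            ((fun a => a ^ p ^ e) '' (I : Set (MvPolynomial (Fin d) k))) := by
      rw [Ideal.submodule_span_eq]
      show _ ∈ I.frobPow (p ^ e)
      rw [← Ideal.Quotient.eq_zero_iff_mem, ← Ideal.Quotient.mkₐ_eq_mk k, map_sum]
      simp only [map_smul, Ideal.Quotient.mkₐ_eq_mk]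
      exact hg
    obtain ⟨N, h, z, hz⟩ := Submodule.mem_span_set'.1 hmem
    choose a ha haq using fun i : Fin N => (Set.mem_image _ _ _).1 (z i).2
    intro rt
    obtain ⟨r, t⟩ := rt
    by_contra hgne
    obtain ⟨μ, hμ0, hμadd, hμmul, hμne⟩ := exists_mu p e hgne
    have hr₀ : ∀ i, toN r i < p ^ e := toN_lt r
    let Φ : MvPolynomial (Fin d) k →+ MvPolynomial (Fin d) k :=
      AddMonoidHom.mk' (phiMap μ (p ^ e) (toN r)) (phiMap_add hμ0 hμadd hq0 (toN r))
    have hΦapp : ∀ f, Φ f = phiMap μ (p ^ e) (toN r) f := fun f => rfl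
    have hL : Φ (∑ rt : (Fin d → Fin (p ^ e)) × Fin n,
        g rt • (monomial (toN rt.1) 1 * v rt.2 ^ p ^ e))
        = ∑ t' : Fin n, C (μ (g (r, t'))) * v t' := by
      rw [map_sum, Fintype.sum_prod_type]
      have hterm : ∀ (r' : Fin d → Fin (p ^ e)) (t' : Fin n),
          Φ (g (r', t') • (monomial (toN r') 1 * v t' ^ p ^ e))
            = if r' = r then C (μ (g (r', t'))) * v t' else 0 := by
        intro r' t'
        have h1 : g (r', t') • (monomial (toN r') 1 * v t' ^ p ^ e)
            = monomial (toN r') (g (r', t')) * v t' ^ p ^ e := by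
          rw [smul_eq_C_mul, ← mul_assoc, C_mul_monomial, mul_one]
        rw [h1, hΦapp, phiMap_mul_pow hμ0 hμadd hμmul hr₀,
          phiMap_monomial_small hμ0 hq0 hr₀ (toN_lt r')]
        by_cases hrr : r' = r
        · rw [if_pos (by rw [hrr] : toN r' = toN r), if_pos hrr]
        · rw [if_neg (fun hcon => hrr (htoN _ _ hcon)), if_neg hrr, zero_mul]
      calc (∑ r' : Fin d → Fin (p ^ e), ∑ t' : Fin n,
            Φ (g (r', t') • ((monomial (toN r')) 1 * v t' ^ p ^ e)))
          = ∑ r' : Fin d → Fin (p ^ e), ∑ t' : Fin n,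
              if r' = r then C (μ (g (r', t'))) * v t' else 0 :=
            Finset.sum_congr rfl fun r' _ => Finset.sum_congr rfl fun t' _ => hterm r' t'
        _ = ∑ t' : Fin n, C (μ (g (r, t'))) * v t' := by
            rw [Finset.sum_comm]
            refine Finset.sum_congr rfl fun t' _ => ?_
            rw [Finset.sum_ite_eq' Finset.univ r (fun r' => C (μ (g (r', t'))) * v t'),
              if_pos (Finset.mem_univ r)]
    have hR : Φ (∑ i : Fin N, h i • (z i : MvPolynomial (Fin d) k)) ∈ I := by
      rw [map_sum]
      refine Submodule.sum_mem _ fun i _ => ?_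
      rw [smul_eq_mul, ← haq i, hΦapp, phiMap_mul_pow hμ0 hμadd hμmul hr₀]
      exact Ideal.mul_mem_left _ _ (ha i)
    rw [hz, hL] at hR
    have hfin0 : (∑ t' : Fin n, μ (g (r, t')) • bI t') = 0 := by
      have h0 : Ideal.Quotient.mkₐ k I (∑ t' : Fin n, μ (g (r, t')) • v t') = 0 := by
        rw [Ideal.Quotient.mkₐ_eq_mk]
        apply Ideal.Quotient.eq_zero_iff_mem.2
        simpa only [smul_eq_C_mul] using hR
      rw [map_sum] at h0
      simp only [map_smul, Ideal.Quotient.mkₐ_eq_mk, hv] at h0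
      exact h0
    exact hμne ((Fintype.linearIndependent_iff.1 bI.linearIndependent) _ hfin0 t)
  have hWsp : ⊤ ≤ Submodule.span k (Set.range W) := by
    have key : ∀ (r : Fin d → Fin (p ^ e)) (c : k) (g : MvPolynomial (Fin d) k),
        Ideal.Quotient.mk (I.frobPow (p ^ e)) (monomial (toN r) c * g ^ p ^ e) ∈
          Submodule.span k (Set.range W) := by
      intro r c g
      rw [← Ideal.Quotient.mkₐ_eq_mk k]
      set cs : Fin n → k := fun t => bI.repr (Ideal.Quotient.mk I g) t with hcs
      have hgI : g - ∑ t, cs t • v t ∈ I := by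
        rw [← Ideal.Quotient.eq_zero_iff_mem, ← Ideal.Quotient.mkₐ_eq_mk k I, map_sub, map_sum]
        simp only [map_smul, Ideal.Quotient.mkₐ_eq_mk, hv]
        rw [bI.sum_repr (Ideal.Quotient.mk I g)]
        exact sub_self _
      have hg : g = (∑ t, cs t • v t) + (g - ∑ t, cs t • v t) := by ring
      rw [hg, add_pow_char_pow, sum_pow_char_pow, mul_add, map_add]
      refine Submodule.add_mem _ ?_ ?_
      · rw [Finset.mul_sum, map_sum]
        refine Submodule.sum_mem _ fun t _ => ?_
        have hmono : (monomial (toN r)) c = C c * monomial (toN r) 1 := by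
          rw [C_mul_monomial, mul_one]
        have hterm : monomial (toN r) c * (cs t • v t) ^ p ^ e
            = (c * cs t ^ p ^ e) • (monomial (toN r) 1 * v t ^ p ^ e) := by
          rw [smul_pow, hmono, smul_eq_C_mul, smul_eq_C_mul, map_mul]
          ring
        rw [hterm, map_smul]
        refine Submodule.smul_mem _ _ (Submodule.subset_span ⟨(r, t), ?_⟩)
        rw [Ideal.Quotient.mkₐ_eq_mk]
      · have hJm : monomial (toN r) c * (g - ∑ t, cs t • v t) ^ p ^ e ∈ I.frobPow (p ^ e) :=
          Ideal.mul_mem_left _ _ (Ideal.subset_span ⟨_, hgI, rfl⟩)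
        have : Ideal.Quotient.mkₐ k (I.frobPow (p ^ e))
            ((monomial (toN r)) c * (g - ∑ t : Fin n, cs t • v t) ^ p ^ e) = 0 := by
          rw [Ideal.Quotient.mkₐ_eq_mk]
          exact Ideal.Quotient.eq_zero_iff_mem.2 hJm
        rw [this]
        exact Submodule.zero_mem _
    rintro x -
    obtain ⟨f, rfl⟩ := Ideal.Quotient.mk_surjective x
    induction f using MvPolynomial.induction_on' with
    | add f1 f2 h1 h2 =>
      rw [(Ideal.Quotient.mk (I.frobPow (p ^ e))).map_add]
      exact Submodule.add_mem _ h1 h2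
    | monomial b c =>
      set rsm : Fin d → Fin (p ^ e) :=
        fun i => ⟨b i % p ^ e, Nat.mod_lt _ (Nat.pos_of_ne_zero hq0)⟩ with hrsm
      set bdiv : Fin d →₀ ℕ := b.mapRange (· / p ^ e) (Nat.zero_div _) with hbdiv
      have hB : toN rsm + p ^ e • bdiv = b := by
        ext i
        simp only [Finsupp.add_apply, Finsupp.smul_apply, Finsupp.mapRange_apply, smul_eq_mul,
          hbdiv, toN_apply, hrsm]
        exact Nat.mod_add_div (b i) (p ^ e)
      have hrep : (monomial b) c = monomial (toN rsm) c * (monomial bdiv 1) ^ p ^ e := by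
        rw [monomial_pow, monomial_mul, one_pow, mul_one, hB]
      rw [hrep]
      exact key _ _ _
  have B : Module.Basis ((Fin d → Fin (p ^ e)) × Fin n) k
      (MvPolynomial (Fin d) k ⧸ I.frobPow (p ^ e)) := Module.Basis.mk hWli hWsp
  rw [Module.finrank_eq_card_basis B, Fintype.card_prod, Fintype.card_fun, Fintype.card_fin,
    Fintype.card_fin, Fintype.card_fin]
end
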